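/- arXiv:2209.02113 — 3 statements merged into one kernel-verified Lean document; each statement's English description precedes it below -/
import Mathlib

section
/- Let g(t) = |t|^{q-1} t with 1 < q < 2. Then there exists C > 0 such that |g(a+b) − g(a) − g'(a) b| ≤ C |b|^q for all a, b ∈ ℝ, where g'(a) = q|a|^{q-1}. -/
open Real Set

private lemma holder_aux {r : ℝ} (hr0 : 0 < r) (hr1 : r ≤ 1) {x y : ℝ}
    (hx : 0 ≤ x) (hy : 0 ≤ y) : |x ^ r - y ^ r| ≤ |x - y| ^ r := by
  wlog h : y ≤ x generalizing x y
  · rw [abs_sub_comm, abs_sub_comm x y]; exact this hy hx (le_of_not_ge h)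
  rw [abs_of_nonneg (sub_nonneg.2 h), abs_of_nonneg
    (sub_nonneg.2 (Real.rpow_le_rpow hy h hr0.le))]
  have key : x ^ r ≤ (x - y) ^ r + y ^ r := by
    have := NNReal.rpow_add_le_add_rpow (⟨x - y, sub_nonneg.2 h⟩) (⟨y, hy⟩) hr0.le hr1
    have hxy : (⟨x - y, sub_nonneg.2 h⟩ + ⟨y, hy⟩ : NNReal) = ⟨x, hx⟩ := by
      ext; show x - y + y = x; ring
    rw [hxy] at this
    have := NNReal.coe_le_coe.2 this
    exact this
  linarith

private lemma g_hasDerivAt {q : ℝ} (hq1 : 1 < q) (t : ℝ) :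
    HasDerivAt (fun t : ℝ => |t| ^ (q - 1) * t) (q * |t| ^ (q - 1)) t := by
  rcases lt_trichotomy t 0 with ht | rfl | ht
  · have h := (hasDerivAt_abs_rpow t hq1).neg
    have heq : (fun t : ℝ => -(|t| ^ q)) =ᶠ[nhds t] (fun t : ℝ => |t| ^ (q - 1) * t) := by
      filter_upwards [eventually_lt_nhds ht] with x hx
      rw [abs_of_neg hx, show q = (q - 1) + 1 by ring,
        Real.rpow_add (by linarith), Real.rpow_one]
      ring
    have := h.congr_of_eventuallyEq heq.symm
    refine this.congr_deriv ?_
    rw [abs_of_neg ht, show q - 1 = (q - 2) + 1 by ring,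
      Real.rpow_add (by linarith), Real.rpow_one]
    ring
  · have h0 : |(0:ℝ)| ^ (q - 1) = 0 := by
      rw [abs_zero, Real.zero_rpow (by linarith)]
    rw [h0, mul_zero]
    rw [hasDerivAt_iff_tendsto_slope]
    have heq : (fun x : ℝ => |x| ^ (q - 1)) =ᶠ[nhdsWithin 0 {(0:ℝ)}ᶜ]
        slope (fun t : ℝ => |t| ^ (q - 1) * t) 0 := by
      filter_upwards [self_mem_nhdsWithin] with x hx
      simp only [slope_def_field, abs_zero]
      rw [Real.zero_rpow (by linarith), mul_zero, sub_zero, sub_zero,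
        mul_div_assoc, div_self (show x ≠ 0 from hx), mul_one]
    refine Filter.Tendsto.congr' heq ?_
    have hc : ContinuousAt (fun x : ℝ => |x| ^ (q - 1)) 0 :=
      (continuous_abs.continuousAt).rpow_const (Or.inr (by linarith))
    have h := hc.continuousWithinAt (s := {(0:ℝ)}ᶜ)
    simpa [abs_zero, Real.zero_rpow (show q - 1 ≠ 0 by linarith)] using h.tendsto
  · have h := hasDerivAt_abs_rpow t hq1
    have heq : (fun t : ℝ => |t| ^ q) =ᶠ[nhds t] (fun t : ℝ => |t| ^ (q - 1) * t) := by
      filter_upwards [eventually_gt_nhds ht] with x hx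
      rw [abs_of_pos hx, show q = (q - 1) + 1 by ring,
        Real.rpow_add hx, Real.rpow_one]
      norm_num
    have := h.congr_of_eventuallyEq heq.symm
    refine this.congr_deriv ?_
    rw [abs_of_pos ht, show q - 1 = (q - 2) + 1 by ring,
      Real.rpow_add ht, Real.rpow_one]
    ring

private lemma mvt_aux {q : ℝ} (hq1 : 1 < q) {a b : ℝ} (hb : b ≠ 0) :
    ∃ c : ℝ, |c - a| ≤ |b| ∧
      |a + b| ^ (q - 1) * (a + b) - |a| ^ (q - 1) * a = q * |c| ^ (q - 1) * b := by
  set g : ℝ → ℝ := fun t => |t| ^ (q - 1) * t with hg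
  rcases hb.lt_or_gt with hbneg | hbpos
  · have hab : a + b < a := by linarith
    obtain ⟨c, hc, hceq⟩ := exists_hasDerivAt_eq_slope g (fun t => q * |t| ^ (q - 1)) hab
      (fun t _ => (g_hasDerivAt hq1 t).continuousAt.continuousWithinAt)
      (fun t _ => g_hasDerivAt hq1 t)
    refine ⟨c, ?_, ?_⟩
    · rw [abs_of_neg hbneg, abs_of_nonpos (by linarith [hc.2])]
      linarith [hc.1]
    · rw [hceq, show a - (a + b) = -b by ring, div_mul_eq_mul_div,
        eq_div_iff (neg_ne_zero.2 hb)]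
      simp only [hg]; ring
  · have hab : a < a + b := by linarith
    obtain ⟨c, hc, hceq⟩ := exists_hasDerivAt_eq_slope g (fun t => q * |t| ^ (q - 1)) hab
      (fun t _ => (g_hasDerivAt hq1 t).continuousAt.continuousWithinAt)
      (fun t _ => g_hasDerivAt hq1 t)
    refine ⟨c, ?_, ?_⟩
    · rw [abs_of_pos hbpos, abs_of_nonneg (by linarith [hc.1])]
      linarith [hc.2]
    · rw [hceq, show a + b - a = b by ring, div_mul_eq_mul_div,
        eq_div_iff hb]

/-- For `g(t) = |t|^{q-1} t` with `1 < q < 2`, there exists `C > 0` such that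
`|g(a+b) − g(a) − g'(a) b| ≤ C|b|^q` for all real `a, b`, where `g'(a) = q|a|^{q-1}`. -/
theorem abs_g_sub_g_sub_deriv_le (q : ℝ) (hq1 : 1 < q) (hq2 : q < 2) :
    ∃ C > 0, ∀ a b : ℝ,
      |(|a + b| ^ (q - 1) * (a + b) - |a| ^ (q - 1) * a - q * |a| ^ (q - 1) * b)| ≤
        C * |b| ^ q := by
  refine ⟨q, by linarith, fun a b => ?_⟩
  rcases eq_or_ne b 0 with rfl | hb
  · simp [Real.zero_rpow (by linarith : q ≠ 0)]
  obtain ⟨c, hc1, hc2⟩ := mvt_aux hq1 (a := a) hb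
  rw [sub_sub, show |a| ^ (q - 1) * a + q * |a| ^ (q - 1) * b
    = |a| ^ (q - 1) * a + q * |a| ^ (q - 1) * b from rfl, ← sub_sub, hc2]
  have : q * |c| ^ (q - 1) * b - q * |a| ^ (q - 1) * b
      = q * ((|c| ^ (q - 1) - |a| ^ (q - 1)) * b) := by ring
  rw [this, abs_mul, abs_of_pos (by linarith : (0:ℝ) < q), abs_mul]
  have h1 : |(|c| ^ (q - 1) - |a| ^ (q - 1))| ≤ |b| ^ (q - 1) := by
    calc |(|c| ^ (q - 1) - |a| ^ (q - 1))| ≤ |(|c| - |a|)| ^ (q - 1) :=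
          holder_aux (by linarith) (by linarith) (abs_nonneg c) (abs_nonneg a)
      _ ≤ |c - a| ^ (q - 1) :=
          Real.rpow_le_rpow (abs_nonneg _) (abs_abs_sub_abs_le_abs_sub c a) (by linarith)
      _ ≤ |b| ^ (q - 1) := Real.rpow_le_rpow (abs_nonneg _) hc1 (by linarith)
  calc q * (|(|c| ^ (q - 1) - |a| ^ (q - 1))| * |b|) ≤ q * (|b| ^ (q - 1) * |b|) := by
        exact mul_le_mul_of_nonneg_left
          (mul_le_mul_of_nonneg_right h1 (abs_nonneg b)) (by linarith)
    _ = q * |b| ^ q := by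
        rw [show q = (q - 1) + 1 by ring, Real.rpow_add (abs_pos.2 hb), Real.rpow_one]
        ring_nf
end

section
/- For every q > 1 and γ ∈ (0,1) there exists C > 0 such that, for all a, b ∈ ℝ, | |a+b|^q log|a+b| − |a|^q log|a| | ≤ C(|a|^{q-1-γ}|b| + |a|^{q-1+γ}|b| + |b|^{q-γ} + |b|^{q+γ}), with the convention 0^q log 0 = 0. -/
open Real

lemma aux_abs_log_le (γ t : ℝ) (hγ : 0 < γ) (ht : 0 < t) :
    |Real.log t| ≤ (t ^ (-γ) + t ^ γ) / γ := by
  have h1 : ∀ s : ℝ, 0 < s → Real.log s ≤ s ^ γ / γ := by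
    intro s hs
    have h : Real.log (s ^ γ) ≤ s ^ γ - 1 := Real.log_le_sub_one_of_pos (rpow_pos_of_pos hs γ)
    rw [Real.log_rpow hs] at h
    rw [le_div_iff₀ hγ]
    nlinarith
  have hn1 : (0:ℝ) ≤ t ^ (-γ) := rpow_nonneg ht.le _
  have hn2 : (0:ℝ) ≤ t ^ γ := rpow_nonneg ht.le _
  rcases le_total 0 (Real.log t) with h | h
  · rw [abs_of_nonneg h]
    calc Real.log t ≤ t ^ γ / γ := h1 t ht
    _ ≤ (t ^ (-γ) + t ^ γ) / γ := by gcongr; linarith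
  · rw [abs_of_nonpos h]
    have := h1 t⁻¹ (inv_pos.mpr ht)
    rw [Real.log_inv, Real.inv_rpow ht.le, ← Real.rpow_neg ht.le] at this
    calc -Real.log t ≤ t ^ (-γ) / γ := this
    _ ≤ (t ^ (-γ) + t ^ γ) / γ := by gcongr; linarith

lemma aux_rpow_log_le (γ p t : ℝ) (hγ : 0 < γ) (hp : 0 < p) (ht : 0 ≤ t) :
    t ^ p * |Real.log t| ≤ (t ^ (p - γ) + t ^ (p + γ)) / γ := by
  rcases eq_or_lt_of_le ht with h | h
  · rw [← h, Real.zero_rpow hp.ne', zero_mul]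
    positivity
  · have := aux_abs_log_le γ t hγ h
    have h2 : t ^ p * |Real.log t| ≤ t ^ p * ((t ^ (-γ) + t ^ γ) / γ) := by
      exact mul_le_mul_of_nonneg_left this (rpow_nonneg ht p)
    calc t ^ p * |Real.log t| ≤ t ^ p * ((t ^ (-γ) + t ^ γ) / γ) := h2
    _ = (t ^ (p - γ) + t ^ (p + γ)) / γ := by
        rw [sub_eq_add_neg, Real.rpow_add h, Real.rpow_add h]; ring

lemma aux_hasDerivAt (q t : ℝ) (ht : 0 < t) :
    HasDerivAt (fun x : ℝ => |x| ^ q * Real.log |x|)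
      (q * t ^ (q - 1) * Real.log t + t ^ (q - 1)) t := by
  have h1 : HasDerivAt (fun x : ℝ => x ^ q * Real.log x)
      (q * t ^ (q - 1) * Real.log t + t ^ (q - 1)) t := by
    have hp : HasDerivAt (fun x : ℝ => x ^ q) (q * t ^ (q - 1)) t :=
      Real.hasDerivAt_rpow_const (Or.inl ht.ne')
    have hl : HasDerivAt Real.log t⁻¹ t := Real.hasDerivAt_log ht.ne'
    have h := hp.mul hl
    refine h.congr_deriv ?_
    rw [Real.rpow_sub ht, Real.rpow_one]
    field_simp
  apply h1.congr_of_eventuallyEq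
  filter_upwards [eventually_gt_nhds ht] with x hx
  rw [abs_of_pos hx]

lemma aux_deriv_bound (q γ t : ℝ) (hq : 1 < q) (hγ1 : 0 < γ) (ht : 0 < t) :
    |q * t ^ (q - 1) * Real.log t + t ^ (q - 1)| ≤
      (q / γ + 1) * (t ^ (q - 1 - γ) + t ^ (q - 1 + γ)) := by
  have h1 : t ^ (q - 1) * |Real.log t| ≤ (t ^ (q - 1 - γ) + t ^ (q - 1 + γ)) / γ :=
    aux_rpow_log_le γ (q - 1) t hγ1 (by linarith) ht.le
  have h2 : t ^ (q - 1) ≤ t ^ (q - 1 - γ) + t ^ (q - 1 + γ) := by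
    rcases le_total t 1 with h | h
    · calc t ^ (q - 1) ≤ t ^ (q - 1 - γ) :=
          Real.rpow_le_rpow_of_exponent_ge ht h (by linarith)
      _ ≤ _ := le_add_of_nonneg_right (Real.rpow_nonneg ht.le _)
    · calc t ^ (q - 1) ≤ t ^ (q - 1 + γ) :=
          Real.rpow_le_rpow_of_exponent_le h (by linarith)
      _ ≤ _ := le_add_of_nonneg_left (Real.rpow_nonneg ht.le _)
  have h3 : |q * t ^ (q - 1) * Real.log t + t ^ (q - 1)| ≤
      q * (t ^ (q - 1) * |Real.log t|) + t ^ (q - 1) := by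
    calc _ ≤ |q * t ^ (q - 1) * Real.log t| + |t ^ (q - 1)| := abs_add_le _ _
    _ = q * (t ^ (q - 1) * |Real.log t|) + t ^ (q - 1) := by
        rw [abs_mul, abs_mul, abs_of_nonneg (by linarith : (0:ℝ) ≤ q),
          abs_of_nonneg (Real.rpow_nonneg ht.le (q-1))]
        ring
  have hq0 : (0:ℝ) ≤ q := by linarith
  calc |q * t ^ (q - 1) * Real.log t + t ^ (q - 1)|
      ≤ q * (t ^ (q - 1) * |Real.log t|) + t ^ (q - 1) := h3
    _ ≤ q * ((t ^ (q - 1 - γ) + t ^ (q - 1 + γ)) / γ) + (t ^ (q - 1 - γ) + t ^ (q - 1 + γ)) := by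
        gcongr
    _ = (q / γ + 1) * (t ^ (q - 1 - γ) + t ^ (q - 1 + γ)) := by
        field_simp

lemma aux_case1 (q γ : ℝ) (hq : 1 < q) (hγ1 : 0 < γ) (hγ2 : γ < 1) (a b : ℝ)
    (ha : 0 < a) (hb : |b| ≤ a / 2) :
    |(|a + b| ^ q * Real.log |a + b| - |a| ^ q * Real.log |a|)| ≤
      ((q / γ + 1) * (3 + (3/2) ^ (q + 1))) *
        (a ^ (q - 1 - γ) * |b| + a ^ (q - 1 + γ) * |b|) := by
  set s : Set ℝ := Set.Icc (a - |b|) (a + |b|) with hs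
  set K : ℝ := 3 + (3/2 : ℝ) ^ (q + 1) with hK
  have hK32 : (0:ℝ) ≤ (3/2 : ℝ) ^ (q + 1) := Real.rpow_nonneg (by norm_num) _
  have hrange : ∀ x ∈ s, a / 2 ≤ x ∧ x ≤ 3 * a / 2 := by
    intro x hx
    obtain ⟨h1, h2⟩ := hx
    constructor <;> linarith
  -- rpow bounds on the range
  have hxb : ∀ x ∈ s, x ^ (q - 1 - γ) + x ^ (q - 1 + γ) ≤
      K * (a ^ (q - 1 - γ) + a ^ (q - 1 + γ)) := by
    intro x hx
    obtain ⟨hx1, hx2⟩ := hrange x hx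
    have hx0 : 0 < x := lt_of_lt_of_le (by linarith) hx1
    have ha2 : (0:ℝ) < a / 2 := by linarith
    have e1 : x ^ (q - 1 - γ) ≤ (2 + (3/2 : ℝ) ^ (q + 1)) * a ^ (q - 1 - γ) := by
      rcases le_total 0 (q - 1 - γ) with hsg | hsg
      · calc x ^ (q - 1 - γ) ≤ (3 * a / 2) ^ (q - 1 - γ) :=
            Real.rpow_le_rpow hx0.le (by linarith) hsg
        _ = (3/2 : ℝ) ^ (q - 1 - γ) * a ^ (q - 1 - γ) := by
            rw [show 3 * a / 2 = (3/2) * a by ring,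
              Real.mul_rpow (by norm_num) ha.le]
        _ ≤ (2 + (3/2 : ℝ) ^ (q + 1)) * a ^ (q - 1 - γ) := by
            gcongr
            have : (3/2 : ℝ) ^ (q - 1 - γ) ≤ (3/2 : ℝ) ^ (q + 1) :=
              Real.rpow_le_rpow_of_exponent_le (by norm_num) (by linarith)
            linarith
      · calc x ^ (q - 1 - γ) ≤ (a / 2) ^ (q - 1 - γ) :=
            Real.rpow_le_rpow_of_nonpos ha2 hx1 hsg
        _ = (2:ℝ)⁻¹ ^ (q - 1 - γ) * a ^ (q - 1 - γ) := by
            rw [show a / 2 = 2⁻¹ * a by ring, Real.mul_rpow (by norm_num) ha.le]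
        _ ≤ (2 + (3/2 : ℝ) ^ (q + 1)) * a ^ (q - 1 - γ) := by
            gcongr
            have h21 : (2:ℝ)⁻¹ ^ (q - 1 - γ) = (2:ℝ) ^ (-(q - 1 - γ)) := by
              rw [Real.rpow_neg (by norm_num), ← Real.inv_rpow (by norm_num)]
            have : (2:ℝ) ^ (-(q - 1 - γ)) ≤ (2:ℝ) ^ (1:ℝ) :=
              Real.rpow_le_rpow_of_exponent_le (by norm_num) (by linarith)
            rw [Real.rpow_one] at this
            rw [h21]; linarith
    have e2 : x ^ (q - 1 + γ) ≤ (3/2 : ℝ) ^ (q + 1) * a ^ (q - 1 + γ) := by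
      calc x ^ (q - 1 + γ) ≤ (3 * a / 2) ^ (q - 1 + γ) :=
          Real.rpow_le_rpow hx0.le (by linarith) (by linarith)
      _ = (3/2 : ℝ) ^ (q - 1 + γ) * a ^ (q - 1 + γ) := by
          rw [show 3 * a / 2 = (3/2) * a by ring, Real.mul_rpow (by norm_num) ha.le]
      _ ≤ (3/2 : ℝ) ^ (q + 1) * a ^ (q - 1 + γ) := by
          have h1 : (3/2 : ℝ) ^ (q - 1 + γ) ≤ (3/2 : ℝ) ^ (q + 1) :=
            Real.rpow_le_rpow_of_exponent_le (by norm_num) (by linarith)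
          have h2 := Real.rpow_nonneg ha.le (q - 1 + γ)
          nlinarith
    have ha1 : (0:ℝ) ≤ a ^ (q - 1 - γ) := Real.rpow_nonneg ha.le _
    have ha2' : (0:ℝ) ≤ a ^ (q - 1 + γ) := Real.rpow_nonneg ha.le _
    rw [hK]; nlinarith
  have hconv : Convex ℝ s := convex_Icc _ _
  have hmem1 : a ∈ s := by
    constructor <;> [linarith [abs_nonneg b]; linarith [abs_nonneg b]]
  have hmem2 : a + b ∈ s := by
    constructor <;> [linarith [neg_abs_le b]; linarith [le_abs_self b]]
  have hderiv : ∀ x ∈ s, HasDerivWithinAt (fun x : ℝ => |x| ^ q * Real.log |x|)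
      (q * x ^ (q - 1) * Real.log x + x ^ (q - 1)) s x := by
    intro x hx
    have hx0 : 0 < x := lt_of_lt_of_le (by linarith) (hrange x hx).1
    exact (aux_hasDerivAt q x hx0).hasDerivWithinAt
  have hbound : ∀ x ∈ s, ‖q * x ^ (q - 1) * Real.log x + x ^ (q - 1)‖ ≤
      (q / γ + 1) * K * (a ^ (q - 1 - γ) + a ^ (q - 1 + γ)) := by
    intro x hx
    have hx0 : 0 < x := lt_of_lt_of_le (by linarith) (hrange x hx).1
    have hqg : (0:ℝ) ≤ q / γ + 1 := by positivity
    calc ‖q * x ^ (q - 1) * Real.log x + x ^ (q - 1)‖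
        ≤ (q / γ + 1) * (x ^ (q - 1 - γ) + x ^ (q - 1 + γ)) :=
          aux_deriv_bound q γ x hq hγ1 hx0
      _ ≤ (q / γ + 1) * (K * (a ^ (q - 1 - γ) + a ^ (q - 1 + γ))) := by
          gcongr
          · exact hxb x hx
      _ = (q / γ + 1) * K * (a ^ (q - 1 - γ) + a ^ (q - 1 + γ)) := by ring
  have := hconv.norm_image_sub_le_of_norm_hasDerivWithin_le hderiv hbound hmem1 hmem2
  rw [add_sub_cancel_left] at this
  rw [Real.norm_eq_abs, Real.norm_eq_abs] at this
  calc |(|a + b| ^ q * Real.log |a + b| - |a| ^ q * Real.log |a|)|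
      ≤ (q / γ + 1) * K * (a ^ (q - 1 - γ) + a ^ (q - 1 + γ)) * |b| := this
    _ = ((q / γ + 1) * K) * (a ^ (q - 1 - γ) * |b| + a ^ (q - 1 + γ) * |b|) := by ring

lemma aux_case2 (q γ : ℝ) (hq : 1 < q) (hγ1 : 0 < γ) (hγ2 : γ < 1) (a b : ℝ)
    (hab : |a| ≤ 2 * |b|) :
    |(|a + b| ^ q * Real.log |a + b| - |a| ^ q * Real.log |a|)| ≤
      (2 * 3 ^ (q + 1) / γ) * (|b| ^ (q - γ) + |b| ^ (q + γ)) := by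
  have hb0 : (0:ℝ) ≤ |b| := abs_nonneg b
  have key : ∀ u : ℝ, 0 ≤ u → u ≤ 3 * |b| →
      u ^ q * |Real.log u| ≤ 3 ^ (q + 1) / γ * (|b| ^ (q - γ) + |b| ^ (q + γ)) := by
    intro u hu0 hu
    have h1 : u ^ q * |Real.log u| ≤ (u ^ (q - γ) + u ^ (q + γ)) / γ :=
      aux_rpow_log_le γ q u hγ1 (by linarith) hu0
    have h2 : u ^ (q - γ) ≤ (3 * |b|) ^ (q - γ) :=
      Real.rpow_le_rpow hu0 hu (by linarith)
    have h3 : u ^ (q + γ) ≤ (3 * |b|) ^ (q + γ) :=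
      Real.rpow_le_rpow hu0 hu (by linarith)
    have h4 : (3 * |b|) ^ (q - γ) = 3 ^ (q - γ) * |b| ^ (q - γ) :=
      Real.mul_rpow (by norm_num) hb0
    have h5 : (3 * |b|) ^ (q + γ) = 3 ^ (q + γ) * |b| ^ (q + γ) :=
      Real.mul_rpow (by norm_num) hb0
    have h6 : (3:ℝ) ^ (q - γ) ≤ 3 ^ (q + 1) :=
      Real.rpow_le_rpow_of_exponent_le (by norm_num) (by linarith)
    have h7 : (3:ℝ) ^ (q + γ) ≤ 3 ^ (q + 1) :=
      Real.rpow_le_rpow_of_exponent_le (by norm_num) (by linarith)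
    have hb1 : (0:ℝ) ≤ |b| ^ (q - γ) := Real.rpow_nonneg hb0 _
    have hb2 : (0:ℝ) ≤ |b| ^ (q + γ) := Real.rpow_nonneg hb0 _
    calc u ^ q * |Real.log u| ≤ (u ^ (q - γ) + u ^ (q + γ)) / γ := h1
    _ ≤ (3 ^ (q + 1) * |b| ^ (q - γ) + 3 ^ (q + 1) * |b| ^ (q + γ)) / γ := by
        gcongr <;>
          nlinarith [mul_le_mul_of_nonneg_right h6 hb1, mul_le_mul_of_nonneg_right h7 hb2]
    _ = 3 ^ (q + 1) / γ * (|b| ^ (q - γ) + |b| ^ (q + γ)) := by ring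
  have k1 := key |a + b| (abs_nonneg _) (by
    calc |a + b| ≤ |a| + |b| := abs_add_le a b
    _ ≤ 3 * |b| := by linarith)
  have k2 := key |a| (abs_nonneg _) (by linarith)
  have habs1 : |(|a + b| ^ q * Real.log |a + b|)| = |a + b| ^ q * abs (Real.log |a + b|) := by
    rw [abs_mul, abs_of_nonneg (Real.rpow_nonneg (abs_nonneg _) q)]
  have habs2 : |(|a| ^ q * Real.log |a|)| = |a| ^ q * abs (Real.log |a|) := by
    rw [abs_mul, abs_of_nonneg (Real.rpow_nonneg (abs_nonneg _) q)]
  calc |(|a + b| ^ q * Real.log |a + b| - |a| ^ q * Real.log |a|)|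
      ≤ |(|a + b| ^ q * Real.log |a + b|)| + |(|a| ^ q * Real.log |a|)| := abs_sub _ _
    _ ≤ 3 ^ (q + 1) / γ * (|b| ^ (q - γ) + |b| ^ (q + γ)) +
        3 ^ (q + 1) / γ * (|b| ^ (q - γ) + |b| ^ (q + γ)) := by
        rw [habs1, habs2]; exact add_le_add k1 k2
    _ = (2 * 3 ^ (q + 1) / γ) * (|b| ^ (q - γ) + |b| ^ (q + γ)) := by ring

/-- For every `q > 1` and `γ ∈ (0,1)` there exists `C > 0` such that, for all real `a, b`,
`| |a+b|^q log|a+b| − |a|^q log|a| | ≤ C(|a|^{q-1-γ}|b| + |a|^{q-1+γ}|b| + |b|^{q-γ} + |b|^{q+γ})`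
(with the convention `0^q log 0 = 0`, which holds automatically since `Real.log 0 = 0`). -/
theorem abs_rpow_mul_log_sub_le (q γ : ℝ) (hq : 1 < q) (hγ1 : 0 < γ) (hγ2 : γ < 1) :
    ∃ C > 0, ∀ a b : ℝ,
      |(|a + b| ^ q * Real.log |a + b| - |a| ^ q * Real.log |a|)| ≤
        C * (|a| ^ (q - 1 - γ) * |b| + |a| ^ (q - 1 + γ) * |b| +
          |b| ^ (q - γ) + |b| ^ (q + γ)) := by
  set C1 : ℝ := (q / γ + 1) * (3 + (3/2) ^ (q + 1)) with hC1
  set C2 : ℝ := 2 * 3 ^ (q + 1) / γ with hC2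
  have hq0 : (0:ℝ) < q := by linarith
  have hC1p : 0 < C1 := by rw [hC1]; positivity
  have hC2p : 0 < C2 := by rw [hC2]; positivity
  refine ⟨C1 + C2, by linarith, fun a b => ?_⟩
  have hT1 : (0:ℝ) ≤ |a| ^ (q - 1 - γ) * |b| := by positivity
  have hT2 : (0:ℝ) ≤ |a| ^ (q - 1 + γ) * |b| := by positivity
  have hT3 : (0:ℝ) ≤ |b| ^ (q - γ) := by positivity
  have hT4 : (0:ℝ) ≤ |b| ^ (q + γ) := by positivity
  rcases le_or_gt |b| (|a| / 2) with hb | hb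
  · rcases eq_or_ne a 0 with rfl | ha
    · have hb0 : b = 0 := by
        have := abs_nonneg b
        have : |b| = 0 := by simpa using le_antisymm (by simpa using hb) this
        exact abs_eq_zero.mp this
      subst hb0
      norm_num
      positivity
    · have main : |(|a + b| ^ q * Real.log |a + b| - |a| ^ q * Real.log |a|)| ≤
          C1 * (|a| ^ (q - 1 - γ) * |b| + |a| ^ (q - 1 + γ) * |b|) := by
        rcases ha.lt_or_gt with haneg | hapos
        · have h := aux_case1 q γ hq hγ1 hγ2 (-a) (-b) (by linarith [abs_of_neg haneg])
            (by rw [abs_neg]; rw [abs_of_neg haneg] at hb; linarith)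
          have e : -a + -b = -(a + b) := by ring
          rw [e, abs_neg, abs_neg, abs_neg, ← abs_of_neg haneg] at h
          exact h
        · have h := aux_case1 q γ hq hγ1 hγ2 a b hapos
            (by rw [abs_of_pos hapos] at hb; linarith)
          simpa only [abs_of_pos hapos] using h
      calc |(|a + b| ^ q * Real.log |a + b| - |a| ^ q * Real.log |a|)|
          ≤ C1 * (|a| ^ (q - 1 - γ) * |b| + |a| ^ (q - 1 + γ) * |b|) := main
        _ ≤ (C1 + C2) * (|a| ^ (q - 1 - γ) * |b| + |a| ^ (q - 1 + γ) * |b| +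
            |b| ^ (q - γ) + |b| ^ (q + γ)) := by nlinarith
  · have h := aux_case2 q γ hq hγ1 hγ2 a b (by linarith)
    calc |(|a + b| ^ q * Real.log |a + b| - |a| ^ q * Real.log |a|)|
        ≤ C2 * (|b| ^ (q - γ) + |b| ^ (q + γ)) := h
      _ ≤ (C1 + C2) * (|a| ^ (q - 1 - γ) * |b| + |a| ^ (q - 1 + γ) * |b| +
          |b| ^ (q - γ) + |b| ^ (q + γ)) := by nlinarith
end

section
/- Let n ≥ 4 and let φ_0(x) = −(α_n/ω_n) ∫_{ℝ^{n-1}} |y|² / ((1+|y|²)^{n/2} |x − (y,0)|^{n-2}) dy for x ∈ ℝ^n_+. Then there exists C > 0 such that |φ_0(x)| ≤ C/(1+|x|)^{n-3} for all x ∈ ℝ^n_+. -/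
open MeasureTheory

/-- `α_n = (n(n-2))^{(n-2)/4}`. -/
noncomputable def alphaN (n : ℕ) : ℝ :=
  ((n : ℝ) * ((n : ℝ) - 2)) ^ (((n : ℝ) - 2) / 4)

/-- The embedding of `ℝ^{n-1}` into `ℝⁿ` as the hyperplane `∂ℝⁿ₊ = {x_n = 0}`. -/
noncomputable def emb (n : ℕ) (y : EuclideanSpace ℝ (Fin (n - 1))) :
    EuclideanSpace ℝ (Fin n) :=
  WithLp.toLp 2 (fun i : Fin n => if h : (i : ℕ) < n - 1 then y ⟨i, h⟩ else 0)

/-- `φ₀(x) = −(α_n/ω_n) ∫_{ℝ^{n-1}} |y|²/((1+|y|²)^{n/2} |x−(y,0)|^{n-2}) dy`,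
where `ω_n` is the surface measure of the unit sphere of `ℝⁿ`. -/
noncomputable def phi0 (n : ℕ) (ωn : ℝ) (x : EuclideanSpace ℝ (Fin n)) : ℝ :=
  -(alphaN n / ωn) * ∫ y : EuclideanSpace ℝ (Fin (n - 1)),
    ‖y‖ ^ 2 / ((1 + ‖y‖ ^ 2) ^ ((n : ℝ) / 2) * ‖x - emb n y‖ ^ ((n : ℝ) - 2))

/-! ### Auxiliary material -/

section Aux

open Set Metric Module
open scoped ENNReal

set_option linter.unusedSectionVars false

namespace Phi0Aux

/-! #### Polar-coordinate evaluation of radial lintegrals -/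

variable {E : Type*} [NormedAddCommGroup E] [NormedSpace ℝ E] [MeasurableSpace E] [BorelSpace E]
  [FiniteDimensional ℝ E] [Nontrivial E] (μ : Measure E) [μ.IsAddHaarMeasure]

lemma my_lintegral_norm (g : ℝ → ℝ≥0∞) (hg : Measurable g) :
    ∫⁻ x, g ‖x‖ ∂μ = μ.toSphere Set.univ *
      ∫⁻ t in Set.Ioi (0:ℝ), ENNReal.ofReal (t ^ (finrank ℝ E - 1)) * g t := by
  have h1 : ∫⁻ x, g ‖x‖ ∂μ = ∫⁻ x : ({0}ᶜ : Set E), g ‖(x:E)‖ ∂(μ.comap (↑)) := by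
    rw [lintegral_subtype_comap (measurableSet_singleton (0:E)).compl (fun x => g ‖x‖),
      restrict_compl_singleton]
  have h2 := (μ.measurePreserving_homeomorphUnitSphereProd).lintegral_comp
    (f := fun p : sphere (0:E) 1 × Ioi (0:ℝ) => g p.2)
    (hg.comp (measurable_subtype_coe.comp measurable_snd))
  simp only [homeomorphUnitSphereProd_apply_snd_coe] at h2
  have h3 : ∫⁻ y : (Ioi (0:ℝ)), g ↑y ∂(Measure.volumeIoiPow (finrank ℝ E - 1))
      = ∫⁻ t in Set.Ioi (0:ℝ), ENNReal.ofReal (t ^ (finrank ℝ E - 1)) * g t := by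
    rw [Measure.volumeIoiPow,
      lintegral_withDensity_eq_lintegral_mul _
        (g := fun y : Ioi (0:ℝ) => g ↑y)
        ((measurable_subtype_coe.pow_const _).ennreal_ofReal)
        (hg.comp measurable_subtype_coe)]
    exact lintegral_subtype_comap measurableSet_Ioi
      (fun t => ENNReal.ofReal (t ^ (finrank ℝ E - 1)) * g t)
  rw [h1, h2, lintegral_prod (fun p : sphere (0:E) 1 × Ioi (0:ℝ) => g ↑p.2)
    ((hg.comp (measurable_subtype_coe.comp measurable_snd)).aemeasurable)]
  simp [h3, lintegral_const, mul_comm]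

lemma my_lintegral_ball (a : ℝ) (ha : 0 < a) (had : a < finrank ℝ E) (ρ : ℝ) (hρ : 0 < ρ) :
    ∫⁻ z in closedBall (0:E) ρ, ENNReal.ofReal (‖z‖ ^ (-a)) ∂μ
      = μ.toSphere Set.univ *
        ENNReal.ofReal (ρ ^ ((finrank ℝ E : ℝ) - a) / ((finrank ℝ E : ℝ) - a)) := by
  have hd1 : 1 ≤ finrank ℝ E := finrank_pos
  set m : ℕ := finrank ℝ E - 1 with hm
  have hdm : (finrank ℝ E : ℝ) = (m : ℝ) + 1 := by
    rw [hm, Nat.cast_sub hd1]; push_cast; ring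
  set c : ℝ := (m : ℝ) - a with hc
  have hc1 : -1 < c := by
    have : a < (m:ℝ) + 1 := by rw [← hdm]; exact_mod_cast had
    rw [hc]; linarith
  set g : ℝ → ℝ≥0∞ := (Set.Ioc (0:ℝ) ρ).indicator (fun t => ENNReal.ofReal (t ^ (-a))) with hgdef
  have hmeasg : Measurable g := Measurable.indicator (by fun_prop) measurableSet_Ioc
  have hpt : ∀ x : E, (closedBall (0:E) ρ).indicator
      (fun z => ENNReal.ofReal (‖z‖ ^ (-a))) x = g ‖x‖ := by
    intro x
    rw [hgdef]
    rcases le_or_gt ‖x‖ ρ with h | h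
    · rw [Set.indicator_of_mem (show x ∈ closedBall (0:E) ρ from mem_closedBall_zero_iff.2 h)]
      by_cases h0 : 0 < ‖x‖
      · rw [Set.indicator_of_mem (show ‖x‖ ∈ Set.Ioc 0 ρ from ⟨h0, h⟩)]
      · have hx0 : ‖x‖ = 0 := le_antisymm (not_lt.1 h0) (norm_nonneg x)
        rw [Set.indicator_of_notMem (show ‖x‖ ∉ Set.Ioc 0 ρ from fun hh => h0 hh.1), hx0,
          Real.zero_rpow (neg_ne_zero.2 ha.ne'), ENNReal.ofReal_zero]
    · rw [Set.indicator_of_notMem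
          (show x ∉ closedBall (0:E) ρ from fun hh => (not_le.2 h) (mem_closedBall_zero_iff.1 hh)),
        Set.indicator_of_notMem (show ‖x‖ ∉ Set.Ioc 0 ρ from fun hh => (not_le.2 h) hh.2)]
  have step1 : ∫⁻ z in closedBall (0:E) ρ, ENNReal.ofReal (‖z‖ ^ (-a)) ∂μ
      = ∫⁻ x, g ‖x‖ ∂μ := by
    rw [← lintegral_indicator measurableSet_closedBall]
    exact lintegral_congr hpt
  rw [step1, my_lintegral_norm μ g hmeasg]
  congr 1
  have hpt2 : ∀ t ∈ Set.Ioi (0:ℝ), ENNReal.ofReal (t ^ m) * g t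
      = (Set.Ioc (0:ℝ) ρ).indicator (fun t => ENNReal.ofReal (t ^ c)) t := by
    intro t ht
    have ht' : (0:ℝ) < t := ht
    rw [hgdef]
    by_cases h : t ∈ Set.Ioc (0:ℝ) ρ
    · rw [Set.indicator_of_mem h, Set.indicator_of_mem h, ← ENNReal.ofReal_mul
        (pow_nonneg ht'.le m), ← Real.rpow_natCast t m, ← Real.rpow_add ht',
        show (m:ℝ) + -a = c by rw [hc]; ring]
    · rw [Set.indicator_of_notMem h, Set.indicator_of_notMem h, mul_zero]
  rw [setLIntegral_congr_fun measurableSet_Ioi hpt2,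
    lintegral_indicator measurableSet_Ioc, Measure.restrict_restrict measurableSet_Ioc,
    Set.inter_eq_self_of_subset_left Set.Ioc_subset_Ioi_self]
  have hint : IntegrableOn (fun t : ℝ => t ^ c) (Set.Ioc 0 ρ) := by
    rw [← intervalIntegrable_iff_integrableOn_Ioc_of_le hρ.le]
    exact intervalIntegral.intervalIntegrable_rpow' hc1
  rw [← ofReal_integral_eq_lintegral_ofReal hint]
  · congr 1
    rw [← intervalIntegral.integral_of_le hρ.le, integral_rpow (Or.inl hc1),
      Real.zero_rpow (by linarith : c + 1 ≠ 0),
      show c + 1 = (finrank ℝ E : ℝ) - a by rw [hc, hdm]; ring]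
    ring_nf
  · filter_upwards [ae_restrict_mem measurableSet_Ioc] with t ht
    exact Real.rpow_nonneg ht.1.le c

lemma my_lintegral_tail (b : ℝ) (hb : (finrank ℝ E : ℝ) < b) (ρ : ℝ) (hρ : 0 < ρ) :
    ∫⁻ z in (closedBall (0:E) ρ)ᶜ, ENNReal.ofReal (‖z‖ ^ (-b)) ∂μ
      = μ.toSphere Set.univ *
        ENNReal.ofReal (ρ ^ ((finrank ℝ E : ℝ) - b) / (b - (finrank ℝ E : ℝ))) := by
  have hd1 : 1 ≤ finrank ℝ E := finrank_pos
  set m : ℕ := finrank ℝ E - 1 with hm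
  have hdm : (finrank ℝ E : ℝ) = (m : ℝ) + 1 := by
    rw [hm, Nat.cast_sub hd1]; push_cast; ring
  set c : ℝ := (m : ℝ) - b with hc
  have hc1 : c < -1 := by
    have : (m:ℝ) + 1 < b := by rw [← hdm]; exact hb
    rw [hc]; linarith
  set g : ℝ → ℝ≥0∞ := (Set.Ioi ρ).indicator (fun t => ENNReal.ofReal (t ^ (-b))) with hgdef
  have hmeasg : Measurable g := Measurable.indicator (by fun_prop) measurableSet_Ioi
  have hpt : ∀ x : E, ((closedBall (0:E) ρ)ᶜ).indicator
      (fun z => ENNReal.ofReal (‖z‖ ^ (-b))) x = g ‖x‖ := by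
    intro x
    rw [hgdef]
    rcases lt_or_ge ρ ‖x‖ with h | h
    · rw [Set.indicator_of_mem
          (show x ∈ (closedBall (0:E) ρ)ᶜ from
            fun hh => (not_le.2 h) (mem_closedBall_zero_iff.1 hh)),
        Set.indicator_of_mem (show ‖x‖ ∈ Set.Ioi ρ from h)]
    · rw [Set.indicator_of_notMem
          (show x ∉ (closedBall (0:E) ρ)ᶜ from fun hh => hh (mem_closedBall_zero_iff.2 h)),
        Set.indicator_of_notMem (show ‖x‖ ∉ Set.Ioi ρ from not_lt.2 h)]
  have step1 : ∫⁻ z in (closedBall (0:E) ρ)ᶜ, ENNReal.ofReal (‖z‖ ^ (-b)) ∂μ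
      = ∫⁻ x, g ‖x‖ ∂μ := by
    rw [← lintegral_indicator measurableSet_closedBall.compl]
    exact lintegral_congr hpt
  rw [step1, my_lintegral_norm μ g hmeasg]
  congr 1
  have hpt2 : ∀ t ∈ Set.Ioi (0:ℝ), ENNReal.ofReal (t ^ m) * g t
      = (Set.Ioi ρ).indicator (fun t => ENNReal.ofReal (t ^ c)) t := by
    intro t ht
    have ht' : (0:ℝ) < t := ht
    rw [hgdef]
    by_cases h : t ∈ Set.Ioi ρ
    · rw [Set.indicator_of_mem h, Set.indicator_of_mem h, ← ENNReal.ofReal_mul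
        (pow_nonneg ht'.le m), ← Real.rpow_natCast t m, ← Real.rpow_add ht',
        show (m:ℝ) + -b = c by rw [hc]; ring]
    · rw [Set.indicator_of_notMem h, Set.indicator_of_notMem h, mul_zero]
  rw [setLIntegral_congr_fun measurableSet_Ioi hpt2,
    lintegral_indicator measurableSet_Ioi, Measure.restrict_restrict measurableSet_Ioi,
    Set.inter_eq_self_of_subset_left (Set.Ioi_subset_Ioi hρ.le)]
  have hint : IntegrableOn (fun t : ℝ => t ^ c) (Set.Ioi ρ) := integrableOn_Ioi_rpow_of_lt hc1 hρ
  rw [← ofReal_integral_eq_lintegral_ofReal hint]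
  · congr 1
    rw [integral_Ioi_rpow_of_lt hc1 hρ,
      show c + 1 = (finrank ℝ E : ℝ) - b by rw [hc, hdm]; ring]
    rw [div_eq_div_iff (by linarith) (by linarith)]
    ring
  · filter_upwards [ae_restrict_mem measurableSet_Ioi] with t ht
    exact Real.rpow_nonneg (le_of_lt (lt_trans hρ ht)) c

lemma trans_ball [μ.IsAddRightInvariant] (p : E) (ρ : ℝ) (e : ℝ) :
    ∫⁻ y in closedBall p ρ, ENNReal.ofReal (‖p - y‖ ^ e) ∂μ
      = ∫⁻ z in closedBall (0:E) ρ, ENNReal.ofReal (‖z‖ ^ e) ∂μ := by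
  have h1 : ∀ y : E, (closedBall p ρ).indicator (fun y => ENNReal.ofReal (‖p - y‖ ^ e)) y
      = (closedBall (0:E) ρ).indicator (fun z => ENNReal.ofReal (‖z‖ ^ e)) (y + -p) := by
    intro y
    rw [← sub_eq_add_neg]
    by_cases h : y ∈ closedBall p ρ
    · rw [Set.indicator_of_mem h,
        Set.indicator_of_mem (by rwa [mem_closedBall_zero_iff, ← dist_eq_norm, ← mem_closedBall]),
        norm_sub_rev]
    · rw [Set.indicator_of_notMem h, Set.indicator_of_notMem
        (fun hh => h (by rwa [mem_closedBall_zero_iff, ← dist_eq_norm, ← mem_closedBall] at hh))]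
  rw [← lintegral_indicator measurableSet_closedBall,
    ← lintegral_indicator measurableSet_closedBall, lintegral_congr h1,
    lintegral_add_right_eq_self
      ((closedBall (0:E) ρ).indicator (fun z => ENNReal.ofReal (‖z‖ ^ e))) (-p)]

/-! #### The embedding and the projection -/

noncomputable def projE (n : ℕ) (x : EuclideanSpace ℝ (Fin n)) :
    EuclideanSpace ℝ (Fin (n - 1)) :=
  WithLp.toLp 2 (fun j : Fin (n - 1) => x ⟨j, lt_of_lt_of_le j.2 (Nat.sub_le n 1)⟩)

variable {n : ℕ}

lemma emb_sum_eq (y : EuclideanSpace ℝ (Fin (n-1))) :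
    ∑ i : Fin n, ‖emb n y i‖ ^ 2 = ∑ j : Fin (n-1), ‖y j‖ ^ 2 := by
  set F : ℕ → ℝ := fun k => if h : k < n - 1 then ‖y ⟨k, h⟩‖ ^ 2 else 0 with hF
  have h1 : ∀ i : Fin n, ‖emb n y i‖ ^ 2 = F ↑i := by
    intro i
    by_cases h : (i : ℕ) < n - 1 <;> simp [emb, hF, h]
  have h2 : ∀ j : Fin (n-1), ‖y j‖ ^ 2 = F ↑j := by
    intro j
    rw [hF]; simp only [j.2, dif_pos, Fin.eta]
  rw [Finset.sum_congr rfl (fun i _ => h1 i), Finset.sum_congr rfl (fun j _ => h2 j),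
    Fin.sum_univ_eq_sum_range F n, Fin.sum_univ_eq_sum_range F (n-1)]
  refine (Finset.sum_subset (Finset.range_subset_range.2 (Nat.sub_le n 1)) ?_).symm
  intro k _ hk
  rw [Finset.mem_range, not_lt] at hk
  rw [hF]; simp [hk, not_lt.2 hk]

lemma emb_norm (y : EuclideanSpace ℝ (Fin (n-1))) : ‖emb n y‖ = ‖y‖ := by
  rw [EuclideanSpace.norm_eq, EuclideanSpace.norm_eq, emb_sum_eq]

lemma projE_norm_le (x : EuclideanSpace ℝ (Fin n)) : ‖projE n x‖ ≤ ‖x‖ := by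
  rw [EuclideanSpace.norm_eq, EuclideanSpace.norm_eq]
  apply Real.sqrt_le_sqrt
  set G : ℕ → ℝ := fun k => if h : k < n then ‖x ⟨k, h⟩‖ ^ 2 else 0 with hG
  have h1 : ∀ j : Fin (n-1), ‖projE n x j‖ ^ 2 = G ↑j := by
    intro j
    rw [hG]; simp only [lt_of_lt_of_le j.2 (Nat.sub_le n 1), dif_pos]; rfl
  have h2 : ∀ i : Fin n, ‖x i‖ ^ 2 = G ↑i := by
    intro i
    rw [hG]; simp only [i.2, dif_pos, Fin.eta]
  rw [Finset.sum_congr rfl (fun j _ => h1 j), Finset.sum_congr rfl (fun i _ => h2 i),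
    Fin.sum_univ_eq_sum_range G (n-1), Fin.sum_univ_eq_sum_range G n]
  apply Finset.sum_le_sum_of_subset_of_nonneg (Finset.range_subset_range.2 (Nat.sub_le n 1))
  intro k _ _
  rw [hG]
  by_cases h : k < n <;> simp [h, sq_nonneg]

lemma projE_sub (x : EuclideanSpace ℝ (Fin n)) (y : EuclideanSpace ℝ (Fin (n-1))) :
    projE n x - y = projE n (x - emb n y) := by
  ext j
  have hj : (j : ℕ) < n - 1 := j.2
  simp only [projE, emb, PiLp.sub_apply, PiLp.toLp_apply]
  rw [dif_pos hj]

lemma projE_dist_le (x : EuclideanSpace ℝ (Fin n)) (y : EuclideanSpace ℝ (Fin (n-1))) :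
    ‖projE n x - y‖ ≤ ‖x - emb n y‖ := by
  rw [projE_sub]; exact projE_norm_le _

/-! #### The integrand and its pointwise bounds -/

noncomputable def itg (n : ℕ) (x : EuclideanSpace ℝ (Fin n))
    (y : EuclideanSpace ℝ (Fin (n-1))) : ℝ :=
  ‖y‖ ^ 2 / ((1 + ‖y‖ ^ 2) ^ ((n : ℝ) / 2) * ‖x - emb n y‖ ^ ((n : ℝ) - 2))

lemma itg_nonneg (x : EuclideanSpace ℝ (Fin n)) (y) : 0 ≤ itg n x y := by
  unfold itg; positivity

lemma itg_zero (x : EuclideanSpace ℝ (Fin n)) : itg n x 0 = 0 := by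
  simp [itg]

lemma itg_key (hn : 4 ≤ n) (x : EuclideanSpace ℝ (Fin n)) (y : EuclideanSpace ℝ (Fin (n-1)))
    (t : ℝ) (ht : 0 < t) (hty : t ≤ ‖x - emb n y‖) (hy : 0 < ‖y‖) :
    itg n x y ≤ ‖y‖ ^ (-((n:ℝ)-2)) * t ^ (-((n:ℝ)-2)) := by
  have hσ : (4:ℝ) ≤ (n:ℝ) := by exact_mod_cast hn
  have e1 : ((‖y‖:ℝ) ^ 2) ^ ((n:ℝ)/2) = ‖y‖ ^ (n:ℝ) := by
    rw [← Real.rpow_natCast ‖y‖ 2, ← Real.rpow_mul (norm_nonneg y),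
      show ((2:ℕ):ℝ)*((n:ℝ)/2) = (n:ℝ) by push_cast; ring]
  have hD1 : ‖y‖ ^ (n:ℝ) ≤ (1 + ‖y‖ ^ 2) ^ ((n:ℝ)/2) := by
    rw [← e1]
    exact Real.rpow_le_rpow (by positivity) (by linarith [sq_nonneg ‖y‖]) (by positivity)
  have hD2 : t ^ ((n:ℝ)-2) ≤ ‖x - emb n y‖ ^ ((n:ℝ)-2) :=
    Real.rpow_le_rpow ht.le hty (by linarith)
  have hpos : (0:ℝ) < ‖y‖ ^ (n:ℝ) * t ^ ((n:ℝ)-2) := by positivity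
  calc itg n x y ≤ ‖y‖ ^ 2 / (‖y‖ ^ (n:ℝ) * t ^ ((n:ℝ)-2)) := by
        unfold itg
        gcongr
    _ = ‖y‖ ^ (-((n:ℝ)-2)) * t ^ (-((n:ℝ)-2)) := by
        rw [← Real.rpow_natCast ‖y‖ 2, div_mul_eq_div_div, ← Real.rpow_sub hy,
          Real.rpow_neg ht.le, div_eq_mul_inv,
          show ((2:ℕ):ℝ) - (n:ℝ) = -((n:ℝ)-2) by push_cast; ring]

lemma itg_key2 (hn : 4 ≤ n) (x : EuclideanSpace ℝ (Fin n)) (y : EuclideanSpace ℝ (Fin (n-1)))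
    (t : ℝ) (ht : 0 < t) (hty : t ≤ ‖x - emb n y‖) :
    itg n x y ≤ ‖y‖ ^ 2 * t ^ (-((n:ℝ)-2)) := by
  have hσ : (4:ℝ) ≤ (n:ℝ) := by exact_mod_cast hn
  have hD1 : (1:ℝ) ≤ (1 + ‖y‖ ^ 2) ^ ((n:ℝ)/2) :=
    Real.one_le_rpow (by linarith [sq_nonneg ‖y‖]) (by positivity)
  have hD2 : t ^ ((n:ℝ)-2) ≤ ‖x - emb n y‖ ^ ((n:ℝ)-2) :=
    Real.rpow_le_rpow ht.le hty (by linarith)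
  calc itg n x y ≤ ‖y‖ ^ 2 / (1 * t ^ ((n:ℝ)-2)) := by
        unfold itg
        gcongr
    _ = ‖y‖ ^ 2 * t ^ (-((n:ℝ)-2)) := by
        rw [one_mul, Real.rpow_neg ht.le, div_eq_mul_inv]

lemma nontrivial_E' (hn : 4 ≤ n) : Nontrivial (EuclideanSpace ℝ (Fin (n-1))) := by
  refine ⟨⟨EuclideanSpace.single ⟨0, by omega⟩ 1, 0, fun h => ?_⟩⟩
  have := congrArg (fun v : EuclideanSpace ℝ (Fin (n-1)) => v ⟨0, by omega⟩) h
  rw [EuclideanSpace.single_apply] at this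
  simp at this

/-! #### The main lintegral bound -/

set_option maxHeartbeats 2000000 in
lemma itg_bound (n : ℕ) (hn : 4 ≤ n) :
    ∃ M : ℝ, 0 < M ∧ ∀ x : EuclideanSpace ℝ (Fin n),
      ∫⁻ y, ENNReal.ofReal (itg n x y) ≤
        ENNReal.ofReal (M * (1 + ‖x‖) ^ (3 - (n:ℝ))) := by
  haveI : Nontrivial (EuclideanSpace ℝ (Fin (n-1))) := nontrivial_E' hn
  have hσ : (4:ℝ) ≤ (n:ℝ) := by exact_mod_cast hn
  set σ : ℝ := (n:ℝ) with hσdef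
  set q : ℝ := σ - 2 with hq
  set b : ℝ := 2*σ - 4 with hbdef
  have hq0 : 0 < q := by rw [hq]; linarith
  have hσ3 : (0:ℝ) < σ - 3 := by linarith
  set Sr : ℝ :=
    ((volume : Measure (EuclideanSpace ℝ (Fin (n-1)))).toSphere Set.univ).toReal with hSr
  have hSnn : 0 ≤ Sr := ENNReal.toReal_nonneg
  have hS : ((volume : Measure (EuclideanSpace ℝ (Fin (n-1)))).toSphere Set.univ)
      = ENNReal.ofReal Sr := (ENNReal.ofReal_toReal (measure_ne_top _ _)).symm
  have hδ : ((finrank ℝ (EuclideanSpace ℝ (Fin (n-1))) : ℕ) : ℝ) = σ - 1 := by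
    rw [finrank_euclideanSpace_fin, Nat.cast_sub (by omega : 1 ≤ n)]
    norm_num [hσdef]
  have ball_eval : ∀ ρ : ℝ, 0 < ρ →
      ∫⁻ z in closedBall (0 : EuclideanSpace ℝ (Fin (n-1))) ρ, ENNReal.ofReal (‖z‖ ^ (-q))
        = ENNReal.ofReal (Sr * ρ) := by
    intro ρ hρ
    rw [my_lintegral_ball volume q hq0
      (by rw [show ((finrank ℝ (EuclideanSpace ℝ (Fin (n-1))) : ℕ) : ℝ) = σ - 1 from hδ]
          rw [hq]; linarith) ρ hρ, hδ,
      show σ - 1 - q = 1 by rw [hq]; ring, Real.rpow_one, div_one, hS,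
      ← ENNReal.ofReal_mul hSnn]
  have tail_eval : ∀ ρ : ℝ, 0 < ρ →
      ∫⁻ z in (closedBall (0 : EuclideanSpace ℝ (Fin (n-1))) ρ)ᶜ, ENNReal.ofReal (‖z‖ ^ (-b))
        = ENNReal.ofReal (Sr * (ρ ^ (3 - σ) / (σ - 3))) := by
    intro ρ hρ
    rw [my_lintegral_tail volume b
      (by rw [show ((finrank ℝ (EuclideanSpace ℝ (Fin (n-1))) : ℕ) : ℝ) = σ - 1 from hδ]
          rw [hbdef]; linarith) ρ hρ, hδ,
      show σ - 1 - b = 3 - σ by rw [hbdef]; ring,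
      show b - (σ - 1) = σ - 3 by rw [hbdef]; ring, hS, ← ENNReal.ofReal_mul hSnn]
  -- the combination lemma
  have comb : ∀ u : ℝ, 0 < u → u ^ (-q) * (u/2) ^ (-q) = 2 ^ q * u ^ (-b) := by
    intro u hu
    have h1 : ((u/2:ℝ)) ^ (-q) = u ^ (-q) * 2 ^ q := by
      rw [Real.div_rpow hu.le (by norm_num : (0:ℝ) ≤ 2), div_eq_mul_inv,
        Real.rpow_neg (by norm_num : (0:ℝ) ≤ 2), inv_inv]
    rw [h1, ← mul_assoc, ← Real.rpow_add hu,
      show -q + -q = -b by rw [hq, hbdef]; ring]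
    ring
  set γ : ℝ := 3 - σ with hγ
  have hγ0 : γ ≤ 0 := by rw [hγ]; linarith
  -- constants
  set Msmall : ℝ := 4*(Sr*3) + 2^q*(Sr*((2:ℝ)^γ/(σ-3))) with hMsmall
  set Mlarge : ℝ := Sr*(4:ℝ)^(σ-3) + 2*(Sr*(4:ℝ)^(σ-3)) + 2^q*(Sr*((4:ℝ)^(σ-3)/(σ-3)))
    with hMlarge
  have hMsmall0 : 0 ≤ Msmall := by
    rw [hMsmall]
    have h1 : (0:ℝ) ≤ 2^q := Real.rpow_nonneg (by norm_num) q
    have h2 : (0:ℝ) ≤ (2:ℝ)^γ := Real.rpow_nonneg (by norm_num) γ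
    have h3 : (0:ℝ) ≤ (2:ℝ)^γ/(σ-3) := div_nonneg h2 hσ3.le
    nlinarith [mul_nonneg hSnn h3, mul_nonneg h1 (mul_nonneg hSnn h3)]
  have hMlarge0 : 0 ≤ Mlarge := by
    rw [hMlarge]
    have h1 : (0:ℝ) ≤ 2^q := Real.rpow_nonneg (by norm_num) q
    have h2 : (0:ℝ) ≤ (4:ℝ)^(σ-3) := Real.rpow_nonneg (by norm_num) _
    have h3 : (0:ℝ) ≤ (4:ℝ)^(σ-3)/(σ-3) := div_nonneg h2 hσ3.le
    nlinarith [mul_nonneg hSnn h2, mul_nonneg h1 (mul_nonneg hSnn h3)]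
  have h2q : (0:ℝ) ≤ 2^q := Real.rpow_nonneg (by norm_num) q
  have h4σ : (0:ℝ) ≤ (4:ℝ)^(σ-3) := Real.rpow_nonneg (by norm_num) _
  have hqe : -((n:ℝ)-2) = -q := by rw [hq, hσdef]
  refine ⟨Msmall * 2^(σ-3) + Mlarge + 1, by positivity, fun x => ?_⟩
  set r : ℝ := ‖x‖ with hr
  set p : EuclideanSpace ℝ (Fin (n-1)) := projE n x with hp
  set R : ℝ := 1 + r with hRdef
  have hr0 : 0 ≤ r := norm_nonneg x
  have hR0 : (0:ℝ) < R := by rw [hRdef]; linarith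
  have hRγ : (0:ℝ) ≤ R ^ γ := Real.rpow_nonneg hR0.le γ
  have hae : ∀ᵐ (y : EuclideanSpace ℝ (Fin (n-1))) ∂volume, y ≠ p := by
    rw [ae_iff]
    simp only [ne_eq, not_not, Set.setOf_eq_eq_singleton]
    exact measure_singleton p
  have hMM : Mlarge ≤ Msmall * 2^(σ-3) + Mlarge + 1 := by
    have : (0:ℝ) ≤ Msmall * 2^(σ-3) :=
      mul_nonneg hMsmall0 (Real.rpow_nonneg (by norm_num) _)
    linarith
  rcases le_or_gt r 1 with hrs | hrl
  · -- small case : ‖x‖ ≤ 1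
    set i1 : EuclideanSpace ℝ (Fin (n-1)) → ℝ≥0∞ :=
      (closedBall (0 : EuclideanSpace ℝ (Fin (n-1))) 2).indicator
        (fun y => ENNReal.ofReal (4 * ‖p - y‖ ^ (-q))) with hi1
    set i2 : EuclideanSpace ℝ (Fin (n-1)) → ℝ≥0∞ :=
      ((closedBall (0 : EuclideanSpace ℝ (Fin (n-1))) 2)ᶜ).indicator
        (fun y => ENNReal.ofReal (2^q * ‖y‖ ^ (-b))) with hi2
    have mi1 : Measurable i1 := Measurable.indicator (by fun_prop) measurableSet_closedBall
    have mi2 : Measurable i2 :=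
      Measurable.indicator (by fun_prop) measurableSet_closedBall.compl
    have ptw : ∀ y : EuclideanSpace ℝ (Fin (n-1)), y ≠ p →
        ENNReal.ofReal (itg n x y) ≤ i1 y + i2 y := by
      intro y hy
      rcases le_or_gt ‖y‖ 2 with h2 | h2
      · have hpy : 0 < ‖p - y‖ := norm_sub_pos_iff.2 (Ne.symm hy)
        have hb1 := itg_key2 hn x y ‖p - y‖ hpy (projE_dist_le x y)
        rw [hqe] at hb1
        have hb2 : itg n x y ≤ 4 * ‖p - y‖ ^ (-q) :=
          le_trans hb1 (mul_le_mul_of_nonneg_right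
            (by nlinarith [norm_nonneg y] : ‖y‖^2 ≤ 4) (Real.rpow_nonneg hpy.le _))
        calc ENNReal.ofReal (itg n x y) ≤ ENNReal.ofReal (4 * ‖p - y‖ ^ (-q)) :=
              ENNReal.ofReal_le_ofReal hb2
          _ = i1 y := by
              rw [hi1, Set.indicator_of_mem (mem_closedBall_zero_iff.2 h2)]
          _ ≤ i1 y + i2 y := le_self_add
      · have hy0 : 0 < ‖y‖ := by linarith
        have hty : ‖y‖/2 ≤ ‖x - emb n y‖ := by
          have h' : ‖emb n y‖ - ‖x‖ ≤ ‖emb n y - x‖ := norm_sub_norm_le _ _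
          rw [emb_norm, norm_sub_rev, ← hr] at h'
          linarith
        have hb1 := itg_key hn x y (‖y‖/2) (by linarith) hty hy0
        rw [hqe] at hb1
        rw [comb ‖y‖ hy0] at hb1
        calc ENNReal.ofReal (itg n x y) ≤ ENNReal.ofReal (2^q * ‖y‖ ^ (-b)) :=
              ENNReal.ofReal_le_ofReal hb1
          _ = i2 y := by
              rw [hi2, Set.indicator_of_mem (show y ∈ (closedBall (0 : EuclideanSpace ℝ
                (Fin (n-1))) 2)ᶜ from fun hm => absurd (mem_closedBall_zero_iff.1 hm)
                (not_le.2 h2))]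
          _ ≤ i1 y + i2 y := le_add_self
    have hsub : closedBall (0 : EuclideanSpace ℝ (Fin (n-1))) 2 ⊆ closedBall p 3 := by
      apply closedBall_subset_closedBall'
      rw [dist_zero_left]
      have h2 : ‖p‖ ≤ r := by rw [hp, hr]; exact projE_norm_le x
      linarith
    have E1 : ∫⁻ y, i1 y ≤ ENNReal.ofReal (4*(Sr*3)) := by
      rw [hi1, lintegral_indicator measurableSet_closedBall]
      calc ∫⁻ y in closedBall (0 : EuclideanSpace ℝ (Fin (n-1))) 2,
            ENNReal.ofReal (4 * ‖p - y‖ ^ (-q))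
          = ∫⁻ y in closedBall (0 : EuclideanSpace ℝ (Fin (n-1))) 2,
              ENNReal.ofReal 4 * ENNReal.ofReal (‖p - y‖ ^ (-q)) := by
            refine setLIntegral_congr_fun measurableSet_closedBall
              (fun y _ => ?_)
            rw [← ENNReal.ofReal_mul (by norm_num)]
        _ ≤ ∫⁻ y in closedBall p 3,
              ENNReal.ofReal 4 * ENNReal.ofReal (‖p - y‖ ^ (-q)) :=
            lintegral_mono_set hsub
        _ = ENNReal.ofReal 4 * ∫⁻ y in closedBall p 3, ENNReal.ofReal (‖p - y‖ ^ (-q)) :=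
            lintegral_const_mul' _ _ ENNReal.ofReal_ne_top
        _ = ENNReal.ofReal 4 * ENNReal.ofReal (Sr * 3) := by
            rw [trans_ball volume p 3 (-q), ball_eval 3 (by norm_num)]
        _ = ENNReal.ofReal (4*(Sr*3)) := by rw [← ENNReal.ofReal_mul (by norm_num)]
    have E2 : ∫⁻ y, i2 y ≤ ENNReal.ofReal (2^q*(Sr*((2:ℝ)^γ/(σ-3)))) := by
      rw [hi2, lintegral_indicator measurableSet_closedBall.compl]
      calc ∫⁻ y in (closedBall (0 : EuclideanSpace ℝ (Fin (n-1))) 2)ᶜ,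
            ENNReal.ofReal (2^q * ‖y‖ ^ (-b))
          = ∫⁻ y in (closedBall (0 : EuclideanSpace ℝ (Fin (n-1))) 2)ᶜ,
              ENNReal.ofReal (2^q) * ENNReal.ofReal (‖y‖ ^ (-b)) := by
            refine setLIntegral_congr_fun measurableSet_closedBall.compl
              (fun y _ => ?_)
            rw [← ENNReal.ofReal_mul h2q]
        _ = ENNReal.ofReal (2^q) *
              ∫⁻ y in (closedBall (0 : EuclideanSpace ℝ (Fin (n-1))) 2)ᶜ,
                ENNReal.ofReal (‖y‖ ^ (-b)) :=
            lintegral_const_mul' _ _ ENNReal.ofReal_ne_top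
        _ = ENNReal.ofReal (2^q) * ENNReal.ofReal (Sr * ((2:ℝ) ^ (3-σ) / (σ-3))) := by
            rw [tail_eval 2 (by norm_num)]
        _ = ENNReal.ofReal (2^q*(Sr*((2:ℝ)^γ/(σ-3)))) := by
            rw [← ENNReal.ofReal_mul h2q, hγ]
        _ ≤ ENNReal.ofReal (2^q*(Sr*((2:ℝ)^γ/(σ-3)))) := le_rfl
    calc ∫⁻ y, ENNReal.ofReal (itg n x y)
        ≤ ∫⁻ y, (i1 y + i2 y) := lintegral_mono_ae (hae.mono fun y hy => ptw y hy)
      _ = (∫⁻ y, i1 y) + ∫⁻ y, i2 y := lintegral_add_left mi1 _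
      _ ≤ ENNReal.ofReal (4*(Sr*3)) + ENNReal.ofReal (2^q*(Sr*((2:ℝ)^γ/(σ-3)))) :=
          add_le_add E1 E2
      _ = ENNReal.ofReal Msmall := by
          rw [← ENNReal.ofReal_add (by nlinarith) (by
            exact mul_nonneg h2q (mul_nonneg hSnn (div_nonneg
              (Real.rpow_nonneg (by norm_num) γ) hσ3.le))), hMsmall]
      _ ≤ ENNReal.ofReal ((Msmall * 2^(σ-3) + Mlarge + 1) * R ^ γ) := by
          apply ENNReal.ofReal_le_ofReal
          have h2γ : (2:ℝ)^γ ≤ R^γ :=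
            Real.rpow_le_rpow_of_nonpos hR0 (by rw [hRdef]; linarith) hγ0
          have key : Msmall * (2^(σ-3) * 2^γ) = Msmall := by
            rw [← Real.rpow_add (by norm_num : (0:ℝ) < 2),
              show σ-3+γ = 0 by rw [hγ]; ring, Real.rpow_zero, mul_one]
          calc Msmall = Msmall * (2^(σ-3)*2^γ) := key.symm
            _ = (Msmall*2^(σ-3)) * 2^γ := by ring
            _ ≤ (Msmall*2^(σ-3)) * R^γ := mul_le_mul_of_nonneg_left h2γ
                (mul_nonneg hMsmall0 (Real.rpow_nonneg (by norm_num) _))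
            _ ≤ (Msmall*2^(σ-3)+Mlarge+1) * R^γ :=
                mul_le_mul_of_nonneg_right (by linarith) hRγ
  · -- large case : 1 < ‖x‖
    have hr2 : (0:ℝ) < r/2 := by linarith
    set iA : EuclideanSpace ℝ (Fin (n-1)) → ℝ≥0∞ :=
      (closedBall (0 : EuclideanSpace ℝ (Fin (n-1))) (r/2)).indicator
        (fun y => ENNReal.ofReal (‖y‖ ^ (-q) * (r/2) ^ (-q))) with hiA
    set iB : EuclideanSpace ℝ (Fin (n-1)) → ℝ≥0∞ :=
      (closedBall p r).indicator
        (fun y => ENNReal.ofReal ((r/2) ^ (-q) * ‖p - y‖ ^ (-q))) with hiB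
    set iC : EuclideanSpace ℝ (Fin (n-1)) → ℝ≥0∞ :=
      ((closedBall (0 : EuclideanSpace ℝ (Fin (n-1))) (r/2))ᶜ).indicator
        (fun y => ENNReal.ofReal (2^q * ‖y‖ ^ (-b))) with hiC
    have miA : Measurable iA := Measurable.indicator (by fun_prop) measurableSet_closedBall
    have miB : Measurable iB := Measurable.indicator (by fun_prop) measurableSet_closedBall
    have miC : Measurable iC :=
      Measurable.indicator (by fun_prop) measurableSet_closedBall.compl
    have ptw : ∀ y : EuclideanSpace ℝ (Fin (n-1)), y ≠ p →
        ENNReal.ofReal (itg n x y) ≤ iA y + iB y + iC y := by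
      intro y hy
      rcases le_or_gt ‖y‖ (r/2) with hA | hA
      · rcases eq_or_ne y 0 with rfl | hy0
        · rw [itg_zero]
          simp
        · have hy0' : 0 < ‖y‖ := norm_pos_iff.2 hy0
          have hty : r/2 ≤ ‖x - emb n y‖ := by
            have h' : ‖x‖ - ‖emb n y‖ ≤ ‖x - emb n y‖ := norm_sub_norm_le _ _
            rw [emb_norm] at h'
            rw [← hr] at h'
            linarith
          have hb1 := itg_key hn x y (r/2) hr2 hty hy0'
          rw [hqe] at hb1
          calc ENNReal.ofReal (itg n x y)
              ≤ ENNReal.ofReal (‖y‖ ^ (-q) * (r/2) ^ (-q)) := ENNReal.ofReal_le_ofReal hb1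
            _ = iA y := by
                rw [hiA, Set.indicator_of_mem (mem_closedBall_zero_iff.2 hA)]
            _ ≤ iA y + iB y := le_self_add
            _ ≤ iA y + iB y + iC y := le_self_add
      · rcases le_or_gt ‖p - y‖ r with hB | hC
        · have hpy : 0 < ‖p - y‖ := norm_sub_pos_iff.2 (Ne.symm hy)
          have hy0' : 0 < ‖y‖ := lt_trans hr2 hA
          have hb1 := itg_key hn x y ‖p - y‖ hpy (projE_dist_le x y) hy0'
          rw [hqe] at hb1
          have hb2 : itg n x y ≤ (r/2) ^ (-q) * ‖p - y‖ ^ (-q) :=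
            le_trans hb1 (mul_le_mul_of_nonneg_right
              (Real.rpow_le_rpow_of_nonpos hr2 hA.le (neg_nonpos.2 hq0.le))
              (Real.rpow_nonneg hpy.le _))
          have hyB : y ∈ closedBall p r := by
            rw [mem_closedBall, dist_eq_norm, norm_sub_rev]
            exact hB
          calc ENNReal.ofReal (itg n x y)
              ≤ ENNReal.ofReal ((r/2) ^ (-q) * ‖p - y‖ ^ (-q)) := ENNReal.ofReal_le_ofReal hb2
            _ = iB y := by rw [hiB, Set.indicator_of_mem hyB]
            _ ≤ iA y + iB y := le_add_self
            _ ≤ iA y + iB y + iC y := le_self_add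
        · have hy0' : 0 < ‖y‖ := lt_trans hr2 hA
          have hpy : 0 < ‖p - y‖ := lt_trans (by linarith) hC
          have hpy2 : ‖y‖/2 ≤ ‖p - y‖ := by
            have h1 : ‖y‖ - ‖p‖ ≤ ‖y - p‖ := norm_sub_norm_le y p
            rw [norm_sub_rev] at h1
            have h2 : ‖p‖ ≤ r := by rw [hp, hr]; exact projE_norm_le x
            linarith
          have hb1 := itg_key hn x y ‖p - y‖ hpy (projE_dist_le x y) hy0'
          rw [hqe] at hb1
          have hb2 : itg n x y ≤ 2^q * ‖y‖ ^ (-b) := by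
            rw [← comb ‖y‖ hy0']
            exact le_trans hb1 (mul_le_mul_of_nonneg_left
              (Real.rpow_le_rpow_of_nonpos (by positivity) hpy2 (neg_nonpos.2 hq0.le))
              (Real.rpow_nonneg (norm_nonneg y) _))
          have hyC : y ∈ (closedBall (0 : EuclideanSpace ℝ (Fin (n-1))) (r/2))ᶜ :=
            fun hm => absurd (mem_closedBall_zero_iff.1 hm) (not_le.2 hA)
          calc ENNReal.ofReal (itg n x y)
              ≤ ENNReal.ofReal (2^q * ‖y‖ ^ (-b)) := ENNReal.ofReal_le_ofReal hb2
            _ = iC y := by rw [hiC, Set.indicator_of_mem hyC]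
            _ ≤ iA y + iB y + iC y := le_add_self
    have hhalf : (r/2) ^ (-q) * (r/2) = (r/2) ^ γ := by
      nth_rewrite 2 [← Real.rpow_one (r/2)]
      rw [← Real.rpow_add hr2, show -q + 1 = γ by rw [hq, hγ]; ring]
    have hRr : R/4 ≤ r/2 := by rw [hRdef]; linarith
    have hG : (r/2) ^ γ ≤ 4^(σ-3) * R^γ := by
      have h1 : (r/2)^γ ≤ (R/4)^γ := Real.rpow_le_rpow_of_nonpos (by positivity) hRr hγ0
      have h2 : (R/4:ℝ)^γ = 4^(σ-3) * R^γ := by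
        rw [Real.div_rpow hR0.le (by norm_num : (0:ℝ) ≤ 4), div_eq_mul_inv,
          ← Real.rpow_neg (by norm_num : (0:ℝ) ≤ 4), show -γ = σ-3 by rw [hγ]; ring]
        ring
      rw [← h2]
      exact h1
    have EA : ∫⁻ y, iA y ≤ ENNReal.ofReal (Sr*((4:ℝ)^(σ-3)*R^γ)) := by
      rw [hiA, lintegral_indicator measurableSet_closedBall]
      calc ∫⁻ y in closedBall (0 : EuclideanSpace ℝ (Fin (n-1))) (r/2),
            ENNReal.ofReal (‖y‖ ^ (-q) * (r/2) ^ (-q))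
          = ∫⁻ y in closedBall (0 : EuclideanSpace ℝ (Fin (n-1))) (r/2),
              ENNReal.ofReal ((r/2) ^ (-q)) * ENNReal.ofReal (‖y‖ ^ (-q)) := by
            refine setLIntegral_congr_fun measurableSet_closedBall
              (fun y _ => ?_)
            rw [mul_comm, ← ENNReal.ofReal_mul (Real.rpow_nonneg hr2.le _)]
        _ = ENNReal.ofReal ((r/2) ^ (-q)) *
              ∫⁻ y in closedBall (0 : EuclideanSpace ℝ (Fin (n-1))) (r/2),
                ENNReal.ofReal (‖y‖ ^ (-q)) :=
            lintegral_const_mul' _ _ ENNReal.ofReal_ne_top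
        _ = ENNReal.ofReal ((r/2) ^ (-q)) * ENNReal.ofReal (Sr * (r/2)) := by
            rw [ball_eval (r/2) hr2]
        _ = ENNReal.ofReal ((r/2) ^ (-q) * (Sr * (r/2))) := by
            rw [← ENNReal.ofReal_mul (Real.rpow_nonneg hr2.le _)]
        _ ≤ ENNReal.ofReal (Sr*((4:ℝ)^(σ-3)*R^γ)) := by
            apply ENNReal.ofReal_le_ofReal
            calc (r/2) ^ (-q) * (Sr * (r/2)) = Sr * ((r/2) ^ (-q) * (r/2)) := by ring
              _ = Sr * (r/2) ^ γ := by rw [hhalf]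
              _ ≤ Sr*((4:ℝ)^(σ-3)*R^γ) := mul_le_mul_of_nonneg_left hG hSnn
    have EB : ∫⁻ y, iB y ≤ ENNReal.ofReal (2*(Sr*((4:ℝ)^(σ-3)*R^γ))) := by
      rw [hiB, lintegral_indicator measurableSet_closedBall]
      calc ∫⁻ y in closedBall p r, ENNReal.ofReal ((r/2) ^ (-q) * ‖p - y‖ ^ (-q))
          = ∫⁻ y in closedBall p r,
              ENNReal.ofReal ((r/2) ^ (-q)) * ENNReal.ofReal (‖p - y‖ ^ (-q)) := by
            refine setLIntegral_congr_fun measurableSet_closedBall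
              (fun y _ => ?_)
            rw [← ENNReal.ofReal_mul (Real.rpow_nonneg hr2.le _)]
        _ = ENNReal.ofReal ((r/2) ^ (-q)) *
              ∫⁻ y in closedBall p r, ENNReal.ofReal (‖p - y‖ ^ (-q)) :=
            lintegral_const_mul' _ _ ENNReal.ofReal_ne_top
        _ = ENNReal.ofReal ((r/2) ^ (-q)) * ENNReal.ofReal (Sr * r) := by
            rw [trans_ball volume p r (-q), ball_eval r (by linarith)]
        _ = ENNReal.ofReal ((r/2) ^ (-q) * (Sr * r)) := by
            rw [← ENNReal.ofReal_mul (Real.rpow_nonneg hr2.le _)]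
        _ ≤ ENNReal.ofReal (2*(Sr*((4:ℝ)^(σ-3)*R^γ))) := by
            apply ENNReal.ofReal_le_ofReal
            calc (r/2) ^ (-q) * (Sr * r) = 2 * (Sr * ((r/2) ^ (-q) * (r/2))) := by ring
              _ = 2 * (Sr * (r/2) ^ γ) := by rw [hhalf]
              _ ≤ 2*(Sr*((4:ℝ)^(σ-3)*R^γ)) := by
                  have := mul_le_mul_of_nonneg_left hG hSnn
                  linarith
    have EC : ∫⁻ y, iC y ≤ ENNReal.ofReal (2^q*(Sr*(((4:ℝ)^(σ-3)*R^γ)/(σ-3)))) := by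
      rw [hiC, lintegral_indicator measurableSet_closedBall.compl]
      calc ∫⁻ y in (closedBall (0 : EuclideanSpace ℝ (Fin (n-1))) (r/2))ᶜ,
            ENNReal.ofReal (2^q * ‖y‖ ^ (-b))
          = ∫⁻ y in (closedBall (0 : EuclideanSpace ℝ (Fin (n-1))) (r/2))ᶜ,
              ENNReal.ofReal (2^q) * ENNReal.ofReal (‖y‖ ^ (-b)) := by
            refine setLIntegral_congr_fun measurableSet_closedBall.compl
              (fun y _ => ?_)
            rw [← ENNReal.ofReal_mul h2q]
        _ = ENNReal.ofReal (2^q) *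
              ∫⁻ y in (closedBall (0 : EuclideanSpace ℝ (Fin (n-1))) (r/2))ᶜ,
                ENNReal.ofReal (‖y‖ ^ (-b)) :=
            lintegral_const_mul' _ _ ENNReal.ofReal_ne_top
        _ = ENNReal.ofReal (2^q) * ENNReal.ofReal (Sr * ((r/2) ^ γ / (σ-3))) := by
            rw [tail_eval (r/2) hr2, hγ]
        _ = ENNReal.ofReal (2^q * (Sr * ((r/2) ^ γ / (σ-3)))) := by
            rw [← ENNReal.ofReal_mul h2q]
        _ ≤ ENNReal.ofReal (2^q*(Sr*(((4:ℝ)^(σ-3)*R^γ)/(σ-3)))) := by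
            apply ENNReal.ofReal_le_ofReal
            have hdiv : (r/2) ^ γ / (σ-3) ≤ ((4:ℝ)^(σ-3)*R^γ)/(σ-3) := by
              gcongr
            exact mul_le_mul_of_nonneg_left
              (mul_le_mul_of_nonneg_left hdiv hSnn) h2q
    calc ∫⁻ y, ENNReal.ofReal (itg n x y)
        ≤ ∫⁻ y, (iA y + iB y + iC y) := lintegral_mono_ae (hae.mono fun y hy => ptw y hy)
      _ = (∫⁻ y, (iA y + iB y)) + ∫⁻ y, iC y := lintegral_add_left (miA.add miB) _
      _ = ((∫⁻ y, iA y) + ∫⁻ y, iB y) + ∫⁻ y, iC y := by rw [lintegral_add_left miA]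
      _ ≤ (ENNReal.ofReal (Sr*((4:ℝ)^(σ-3)*R^γ)) +
            ENNReal.ofReal (2*(Sr*((4:ℝ)^(σ-3)*R^γ)))) +
            ENNReal.ofReal (2^q*(Sr*(((4:ℝ)^(σ-3)*R^γ)/(σ-3)))) :=
          add_le_add (add_le_add EA EB) EC
      _ = ENNReal.ofReal (Mlarge * R^γ) := by
          rw [← ENNReal.ofReal_add (mul_nonneg hSnn (mul_nonneg h4σ hRγ))
            (by nlinarith [mul_nonneg hSnn (mul_nonneg h4σ hRγ)]),
            ← ENNReal.ofReal_add (by nlinarith [mul_nonneg hSnn (mul_nonneg h4σ hRγ)])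
            (mul_nonneg h2q (mul_nonneg hSnn (div_nonneg (mul_nonneg h4σ hRγ) hσ3.le)))]
          congr 1
          rw [hMlarge]
          ring
      _ ≤ ENNReal.ofReal ((Msmall * 2^(σ-3) + Mlarge + 1) * R ^ γ) :=
          ENNReal.ofReal_le_ofReal (mul_le_mul_of_nonneg_right hMM hRγ)

end Phi0Aux

end Aux

/-- Decay of `φ₀`: there is `C > 0` with `|φ₀(x)| ≤ C/(1+|x|)^{n-3}` on the half-space
`ℝⁿ₊ = {x_n > 0}`. -/
theorem phi0_decay (n : ℕ) (hn : 4 ≤ n) (ωn : ℝ) (hω : 0 < ωn) :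
    ∃ C > 0, ∀ x : EuclideanSpace ℝ (Fin n), 0 < x ⟨n - 1, by omega⟩ →
      |phi0 n ωn x| ≤ C / (1 + ‖x‖) ^ ((n : ℝ) - 3) := by
  obtain ⟨M, hM, hb⟩ := Phi0Aux.itg_bound n hn
  have hn4 : (4:ℝ) ≤ (n:ℝ) := by exact_mod_cast hn
  have hbase : 0 < (n:ℝ) * ((n:ℝ) - 2) := by nlinarith
  have hα : 0 < alphaN n := Real.rpow_pos_of_pos hbase _
  refine ⟨(alphaN n / ωn) * M, by positivity, fun x _ => ?_⟩
  have hR0 : (0:ℝ) < 1 + ‖x‖ := by positivity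
  have hphi : phi0 n ωn x = -(alphaN n / ωn) * ∫ y, Phi0Aux.itg n x y := rfl
  rw [hphi, abs_mul, abs_neg, abs_of_pos (by positivity : 0 < alphaN n / ωn)]
  have h1 : |∫ y, Phi0Aux.itg n x y| ≤ M * (1 + ‖x‖) ^ (3 - (n:ℝ)) := by
    have h2 := MeasureTheory.norm_integral_le_lintegral_norm (μ := volume)
      (fun y => Phi0Aux.itg n x y)
    rw [Real.norm_eq_abs] at h2
    have h3 : ∫⁻ y, ENNReal.ofReal ‖Phi0Aux.itg n x y‖
        = ∫⁻ y, ENNReal.ofReal (Phi0Aux.itg n x y) :=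
      lintegral_congr fun y => by
        rw [Real.norm_eq_abs, abs_of_nonneg (Phi0Aux.itg_nonneg x y)]
    rw [h3] at h2
    exact le_trans h2 (ENNReal.toReal_le_of_le_ofReal (by positivity) (hb x))
  calc (alphaN n / ωn) * |∫ y, Phi0Aux.itg n x y|
      ≤ (alphaN n / ωn) * (M * (1 + ‖x‖) ^ (3 - (n:ℝ))) :=
        mul_le_mul_of_nonneg_left h1 (by positivity)
    _ = (alphaN n / ωn * M) / (1 + ‖x‖) ^ ((n:ℝ) - 3) := by
        rw [show (3 - (n:ℝ)) = -((n:ℝ) - 3) by ring, Real.rpow_neg hR0.le, div_eq_mul_inv]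
        ring
end
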